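/- Let p be a walk in G from u to v whose weight is less than or equal to the weight of every walk in G from u to v. Then for every h ∈ A, the unique lift of p starting at (u,h) in the Z₂-homology cover Ḡ has weight less than or equal to the weight of every walk in Ḡ from (u,h) to (v, h + sig(p)). In other words, every lift of a shortest path in G is a shortest path in Ḡ. -/

import Mathlib

/-- The `Z₂`-homology cover of `G`: the simple graph on `V × (Fin β → ZMod 2)` in which
`(u, h)` and `(v, h')` are adjacent iff `u` and `v` are adjacent in `G` and
`h' = h + σ u v`. -/
def HomologyCover (β : ℕ) {V : Type*} (G : SimpleGraph V)
    (σ : V → V → (Fin β → ZMod 2)) (hσ : ∀ u v, σ u v = σ v u) :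
    SimpleGraph (V × (Fin β → ZMod 2)) where
  Adj x y := G.Adj x.1 y.1 ∧ y.2 = x.2 + σ x.1 y.1
  symm := ⟨by
    rintro ⟨u, h⟩ ⟨v, h'⟩ ⟨hadj, heq⟩
    refine ⟨hadj.symm, ?_⟩
    simp only at heq ⊢
    subst heq
    rw [hσ v u]
    funext i
    simp only [Pi.add_apply]
    rw [add_assoc, CharTwo.add_self_eq_zero, add_zero]⟩
  loopless := ⟨fun x hx => G.loopless.1 x.1 hx.1⟩

/-- The covering projection `π (v, h) = v`, as a graph homomorphism from the
`Z₂`-homology cover of `G` to `G`. -/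
def homologyProj (β : ℕ) {V : Type*} (G : SimpleGraph V)
    (σ : V → V → (Fin β → ZMod 2)) (hσ : ∀ u v, σ u v = σ v u) :
    HomologyCover β G σ hσ →g G where
  toFun := Prod.fst
  map_rel' := fun hadj => hadj.1

/-- The signature of a walk: the sum of `σ x y` over the darts `(x, y)` traversed by the
walk, with multiplicity. -/
def walkSig {β : ℕ} {V : Type*} {G : SimpleGraph V} (σ : V → V → (Fin β → ZMod 2))
    {u v : V} (p : G.Walk u v) : Fin β → ZMod 2 :=
  (p.darts.map fun d => σ d.toProd.1 d.toProd.2).sum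

/-- The weight of a walk: the sum of `w x y` over the darts `(x, y)` traversed by the
walk, with multiplicity. -/
def walkWeight {V : Type*} {G : SimpleGraph V} (w : V → V → ℝ)
    {u v : V} (p : G.Walk u v) : ℝ :=
  (p.darts.map fun d => w d.toProd.1 d.toProd.2).sum

/-- Let `p` be a walk in `G` from `u` to `v` whose weight is at most the weight of every
walk in `G` from `u` to `v`.  Then for every `h`, the lift of `p` starting at `(u, h)`
(which ends at `(v, h + sig p)`) has weight at most the weight of every walk in the
`Z₂`-homology cover from `(u, h)` to `(v, h + sig p)`: every lift of a shortest path is a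
shortest path in the cover. -/
theorem lift_of_shortest_is_shortest (β : ℕ) {V : Type*} (G : SimpleGraph V)
    (σ : V → V → (Fin β → ZMod 2)) (hσ : ∀ u v, σ u v = σ v u)
    (w : V → V → ℝ) (hw : ∀ x y, w x y = w y x)
    (u v : V) (p : G.Walk u v)
    (hp : ∀ p' : G.Walk u v, walkWeight w p ≤ walkWeight w p')
    (h : Fin β → ZMod 2)
    (q : (HomologyCover β G σ hσ).Walk (u, h) (v, h + walkSig σ p))
    (hq : q.map (homologyProj β G σ hσ) = p) :
    ∀ q' : (HomologyCover β G σ hσ).Walk (u, h) (v, h + walkSig σ p),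
      walkWeight (fun x y => w x.1 y.1) q ≤ walkWeight (fun x y => w x.1 y.1) q' := by
  intro q'
  have key : ∀ (r : (HomologyCover β G σ hσ).Walk (u, h) (v, h + walkSig σ p)),
      walkWeight (fun x y => w x.1 y.1) r
        = walkWeight w (r.map (homologyProj β G σ hσ)) := by
    intro r
    simp only [walkWeight, SimpleGraph.Walk.darts_map, List.map_map]
    rfl
  rw [key q, key q', hq]
  exact hp _
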